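/- Let {n_k} ⊂ ℕ be a lacunary sequence, i.e., inf_k n_{k+1}/n_k > 1, and {a_k} ⊂ ℂ satisfy Σ_k |a_k|^2 (log n_k)^3 / n_k^4 < ∞. Then A(z) = Σ_k a_k z^{n_k} satisfies sup_{a∈D} (log(e/(1-|a|)))^2 (1-|a|)^{-1} ∫_{S_a} |A(z)|^2 (1-|z|^2)^3 dm(z) < ∞. -/

import Mathlib

open Metric Set Real
open MeasureTheory

lemma aux_mono {t s : ℝ} (ht : 0 < t) (hts : t ≤ s) (hs1 : s ≤ 1) :
    t * (1 - Real.log t) ≤ s * (1 - Real.log s) := by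
  have hs : 0 < s := lt_of_lt_of_le ht hts
  have hu : 0 < t / s := div_pos ht hs
  have hu1 : t / s ≤ 1 := (div_le_one hs).2 hts
  have hlogs : Real.log s ≤ 0 := Real.log_nonpos (le_of_lt hs) hs1
  have hkey : -Real.log (t/s) ≤ (t/s)⁻¹ - 1 := by
    have := Real.log_le_sub_one_of_pos (inv_pos.2 hu)
    rwa [Real.log_inv] at this
  have hlogt : Real.log t = Real.log s + Real.log (t/s) := by
    rw [← Real.log_mul (ne_of_gt hs) (ne_of_gt hu)]
    congr 1; field_simp
  have hinv : (t/s)⁻¹ * (t/s) = 1 := inv_mul_cancel₀ (ne_of_gt hu)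
  set u := t / s with hudef
  have htsu : t = s * u := by rw [hudef]; field_simp
  rw [hlogt, htsu]
  have h2 : -(u * Real.log u) ≤ 1 - u := by
    have := mul_le_mul_of_nonneg_left hkey (le_of_lt hu)
    nlinarith [this]
  nlinarith [mul_le_mul_of_nonneg_left h2 (le_of_lt hs),
    mul_nonneg (le_of_lt hs) (mul_nonneg (sub_nonneg.2 hu1) (neg_nonneg.2 hlogs))]

lemma aux_tele {L c : ℝ} (hL : 1 ≤ L) (hc : 1/2 ≤ c) :
    Summable (fun j : ℕ => ((L + c*j)^3)⁻¹) ∧ ∑' j : ℕ, ((L + c*j)^3)⁻¹ ≤ 3 / L^2 := by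
  have hc0 : 0 < c := lt_of_lt_of_le (by norm_num) hc
  have hL0 : 0 < L := lt_of_lt_of_le one_pos hL
  have hpos : ∀ j : ℕ, 0 < L + c*j := fun j => by positivity
  set f : ℕ → ℝ := fun j => ((L + c*j)^2)⁻¹ with hf
  have hkey : ∀ j : ℕ, ((L + c*(j+1:ℕ))^3)⁻¹ ≤ (f j - f (j+1)) / c := by
    intro j
    have hb := hpos j
    have ha : L + c*((j:ℝ)+1) = (L + c*j) + c := by ring
    rw [hf]
    simp only [Nat.cast_add, Nat.cast_one]
    rw [le_div_iff₀ hc0, ha]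
    set b := L + c*(j:ℝ)
    have hab : 0 < b + c := by positivity
    rw [inv_sub_inv (by positivity) (by positivity)]
    rw [inv_mul_eq_div, div_le_div_iff₀ (by positivity) (by positivity)]
    have e1 : b*(b+c)^2 ≤ (b+c)^3 := by nlinarith [sq_nonneg (b+c), mul_pos hb hab]
    have e2 : c*(b^2*(b+c)^2) ≤ 2*b*c*(b+c)^3 := by nlinarith [mul_le_mul_of_nonneg_left e1 (le_of_lt (mul_pos hc0 hb))]
    nlinarith [mul_nonneg (mul_nonneg hc0.le hc0.le) (pow_pos hab 3).le]
  have hnn : ∀ j : ℕ, 0 ≤ ((L + c*j)^3)⁻¹ := fun j => by positivity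
  have hbound : ∀ N : ℕ, ∑ j ∈ Finset.range N, ((L + c*j)^3)⁻¹ ≤ 3 / L^2 := by
    intro N
    match N with
    | 0 => simp; positivity
    | (M+1) =>
      rw [Finset.sum_range_succ']
      have h1 : ∑ i ∈ Finset.range M, ((L + c*(i+1:ℕ))^3)⁻¹ ≤ ∑ i ∈ Finset.range M, (f i - f (i+1)) / c :=
        Finset.sum_le_sum (fun i _ => hkey i)
      have h2 : ∑ i ∈ Finset.range M, (f i - f (i+1)) / c = (f 0 - f M) / c := by
        rw [← Finset.sum_div, Finset.sum_range_sub']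
      have hfM : 0 ≤ f M := by rw [hf]; positivity
      have h3 : (f 0 - f M) / c ≤ f 0 / c := by gcongr; linarith
      have h4 : f 0 / c ≤ 2 / L^2 := by
        rw [hf]
        simp only [Nat.cast_zero, mul_zero, add_zero]
        rw [div_le_div_iff₀ hc0 (by positivity)]
        have hinv : (L^2)⁻¹ * L^2 = 1 := inv_mul_cancel₀ (by positivity)
        nlinarith
      have h5 : ((L + c*(0:ℕ))^3)⁻¹ ≤ 1 / L^2 := by
        simp only [Nat.cast_zero, mul_zero, add_zero]
        rw [one_div]
        have h25 : L^2 ≤ L^3 := pow_le_pow_right₀ hL (by norm_num)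
        exact inv_anti₀ (by positivity) h25
      calc ∑ i ∈ Finset.range M, ((L + c*(i+1:ℕ))^3)⁻¹ + ((L + c*(0:ℕ))^3)⁻¹
          ≤ (f 0 - f M)/c + 1/L^2 := by rw [← h2]; exact add_le_add h1 h5
        _ ≤ 2/L^2 + 1/L^2 := add_le_add (le_trans h3 h4) le_rfl
        _ = 3/L^2 := by ring
  constructor
  · exact summable_of_sum_range_le hnn hbound
  · exact Real.tsum_le_of_sum_range_le hnn hbound

lemma aux_div3 {A S u v m : ℝ} (hS : 0 < S) (hu : 0 < u) (hv : 0 < v) (hm : 0 ≤ m)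
    (h : A * (u * v) ≤ 81 * m * S) : A / S ≤ 81 * u⁻¹ * v⁻¹ * m := by
  rw [div_le_iff₀ hS, show 81 * u⁻¹ * v⁻¹ * m * S = (81 * m * S) * u⁻¹ * v⁻¹ by ring]
  calc A = A * (u*v) * u⁻¹ * v⁻¹ := by field_simp
    _ ≤ 81*m*S * u⁻¹ * v⁻¹ :=
        mul_le_mul_of_nonneg_right (mul_le_mul_of_nonneg_right h (inv_nonneg.2 hu.le))
          (inv_nonneg.2 hv.le)

lemma aux_star {n : ℕ} (hn : 1 ≤ n) {t : ℝ} (ht : 0 < t) (ht1 : t ≤ 1) :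
    (n:ℝ)^2 * Real.exp (-((n:ℝ)*t)) / Real.sqrt ((max 1 (Real.log n))^3)
      ≤ 81 * (t^2)⁻¹ * (Real.sqrt ((1 - Real.log t)^3))⁻¹
          * min (Real.sqrt ((n:ℝ)*t)) (Real.sqrt ((n:ℝ)*t))⁻¹ := by
  have hn0 : (1:ℝ) ≤ (n:ℝ) := by exact_mod_cast hn
  set x := (n:ℝ)*t with hx
  have hx0 : 0 < x := by positivity
  set lam := max 1 (Real.log n) with hlam
  have hlam1 : (1:ℝ) ≤ lam := le_max_left _ _
  have hlam0 : 0 < lam := lt_of_lt_of_le one_pos hlam1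
  set L := 1 - Real.log t with hL
  have hlogt : Real.log t ≤ 0 := Real.log_nonpos ht.le ht1
  have hL1 : 1 ≤ L := by simp only [hL]; linarith
  have hL0 : 0 < L := lt_of_lt_of_le one_pos hL1
  have hsl : 0 < Real.sqrt (lam^3) := Real.sqrt_pos.2 (by positivity)
  have hsL : 0 < Real.sqrt (L^3) := Real.sqrt_pos.2 (by positivity)
  rcases le_or_gt 1 x with hx1 | hx1
  · -- case x ≥ 1
    have hsx : 1 ≤ Real.sqrt x := by
      rw [show (1:ℝ) = Real.sqrt 1 by simp]; exact Real.sqrt_le_sqrt hx1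
    have hmin : min (Real.sqrt x) (Real.sqrt x)⁻¹ = (Real.sqrt x)⁻¹ :=
      min_eq_right (le_trans (inv_le_one_of_one_le₀ hsx) hsx)
    rw [hmin]
    have hlogn : L - 1 ≤ Real.log n := by
      have h1 : 1/t ≤ (n:ℝ) := by rw [div_le_iff₀ ht]; linarith [hx1]
      have := Real.log_le_log (by positivity) h1
      rw [Real.log_div one_ne_zero (ne_of_gt ht), Real.log_one] at this
      simp only [hL]; linarith
    have hlam2 : L ≤ 2*lam := by
      rcases le_total L 2 with h | h
      · linarith [hlam1]
      · have : L - 1 ≤ lam := le_trans hlogn (le_max_right _ _)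
        linarith
    have hkey1 : Real.sqrt (L^3) ≤ 3 * Real.sqrt (lam^3) := by
      have h1 : L^3 ≤ 9 * lam^3 := by
        nlinarith [pow_le_pow_left₀ hL0.le hlam2 3, pow_pos hlam0 3]
      calc Real.sqrt (L^3) ≤ Real.sqrt (9 * lam^3) := Real.sqrt_le_sqrt h1
        _ = 3 * Real.sqrt (lam^3) := by
            rw [show (9:ℝ)*lam^3 = 3^2*lam^3 by norm_num, Real.sqrt_mul (by positivity),
              Real.sqrt_sq (by norm_num)]
    have hkey2 : x^3 ≤ 27 * Real.exp x := by
      have h1 : x/3 ≤ Real.exp (x/3) := le_trans (by linarith) (Real.add_one_le_exp (x/3))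
      have h2 : (x/3)^3 ≤ (Real.exp (x/3))^3 := pow_le_pow_left₀ (by positivity) h1 3
      have h3 : (Real.exp (x/3))^3 = Real.exp x := by
        rw [← Real.exp_nat_mul]; congr 1; push_cast; ring
      rw [h3] at h2; nlinarith [h2]
    have hsxx : Real.sqrt x ≤ x := by
      nlinarith [Real.sq_sqrt hx0.le, Real.sqrt_nonneg x]
    have hxe : x^3 * Real.exp (-x) ≤ 27 := by
      rw [Real.exp_neg, ← div_eq_mul_inv, div_le_iff₀ (Real.exp_pos x)]
      linarith [hkey2]
    have hA' : x^2 * Real.exp (-x) ≤ 27 * (Real.sqrt x)⁻¹ := by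
      rw [show (27:ℝ) * (Real.sqrt x)⁻¹ = 27 / Real.sqrt x by ring, le_div_iff₀ (by positivity)]
      have e1 : x^2 * Real.exp (-x) * Real.sqrt x ≤ x^2 * Real.exp (-x) * x := by
        have he : 0 ≤ x^2 * Real.exp (-x) := by positivity
        exact mul_le_mul_of_nonneg_left hsxx he
      calc x^2 * Real.exp (-x) * Real.sqrt x ≤ x^2 * Real.exp (-x) * x := e1
        _ = x^3 * Real.exp (-x) := by ring
        _ ≤ 27 := hxe
    have hfin : (n:ℝ)^2 * Real.exp (-x) * (t^2 * Real.sqrt (L^3))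
        ≤ 81 * (Real.sqrt x)⁻¹ * Real.sqrt (lam^3) := by
      have e0 : (n:ℝ)^2 * Real.exp (-x) * (t^2 * Real.sqrt (L^3))
          = (x^2 * Real.exp (-x)) * Real.sqrt (L^3) := by rw [hx]; ring
      rw [e0]
      calc (x^2 * Real.exp (-x)) * Real.sqrt (L^3)
          ≤ (27 * (Real.sqrt x)⁻¹) * (3 * Real.sqrt (lam^3)) :=
            mul_le_mul hA' hkey1 (Real.sqrt_nonneg _) (by positivity)
        _ = 81 * (Real.sqrt x)⁻¹ * Real.sqrt (lam^3) := by ring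
    exact aux_div3 hsl (by positivity) hsL (by positivity) (by linarith [hfin])
  · -- case x < 1
    have hsx1 : Real.sqrt x ≤ 1 := by
      rw [show (1:ℝ) = Real.sqrt 1 by simp]; exact Real.sqrt_le_sqrt hx1.le
    have hsx0 : 0 < Real.sqrt x := Real.sqrt_pos.2 hx0
    have hmin : min (Real.sqrt x) (Real.sqrt x)⁻¹ = Real.sqrt x :=
      min_eq_left (le_trans hsx1 (one_le_inv₀ hsx0 |>.2 hsx1))
    rw [hmin]
    have hxL : x * L ≤ 2 * lam := by
      have hnpos : (0:ℝ) < (n:ℝ) := by linarith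
      have hti : t ≤ 1/(n:ℝ) := by rw [le_div_iff₀ hnpos]; nlinarith [hx1.le]
      have hn1 : 1/(n:ℝ) ≤ 1 := by rw [div_le_one hnpos]; exact hn0
      have hmono := aux_mono ht hti hn1
      have hlog1n : Real.log (1/(n:ℝ)) = -Real.log n := by
        rw [one_div, Real.log_inv]
      rw [hlog1n] at hmono
      have := mul_le_mul_of_nonneg_left hmono hnpos.le
      have heq : (n:ℝ) * (1/(n:ℝ) * (1 - -Real.log n)) = 1 + Real.log n := by
        field_simp
        ring
      rw [heq] at this
      have hln : Real.log n ≤ lam := le_max_right _ _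
      have hxLe : x * L = (n:ℝ) * (t * (1 - Real.log t)) := by rw [hx, hL]; ring
      rw [hxLe]; linarith
    have hB : x^2 * Real.sqrt (L^3) ≤ 81 * (Real.sqrt x * Real.sqrt (lam^3)) := by
      have h1 : (x*L)^3 ≤ (2*lam)^3 := pow_le_pow_left₀ (by positivity) hxL 3
      have h2 : x^4*L^3 ≤ 6561*(x*lam^3) := by
        nlinarith [mul_le_mul_of_nonneg_left h1 hx0.le, pow_pos hlam0 3, hx0.le,
          mul_nonneg hx0.le (pow_pos hlam0 3).le]
      calc x^2 * Real.sqrt (L^3) = Real.sqrt (x^4*L^3) := by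
            rw [Real.sqrt_mul (by positivity), show x^4 = (x^2)^2 by ring,
              Real.sqrt_sq (by positivity)]
        _ ≤ Real.sqrt (6561*(x*lam^3)) := Real.sqrt_le_sqrt h2
        _ = 81 * (Real.sqrt x * Real.sqrt (lam^3)) := by
            rw [Real.sqrt_mul (by norm_num : (0:ℝ) ≤ 6561), Real.sqrt_mul hx0.le,
              show (6561:ℝ) = 81^2 by norm_num, Real.sqrt_sq (by norm_num)]
    have hexp : Real.exp (-x) ≤ 1 := Real.exp_le_one_iff.2 (by linarith)
    have hfin : (n:ℝ)^2 * Real.exp (-x) * (t^2 * Real.sqrt (L^3))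
        ≤ 81 * Real.sqrt x * Real.sqrt (lam^3) := by
      have e0 : (n:ℝ)^2 * Real.exp (-x) * (t^2 * Real.sqrt (L^3))
          = (x^2 * Real.sqrt (L^3)) * Real.exp (-x) := by rw [hx]; ring
      rw [e0]
      calc (x^2 * Real.sqrt (L^3)) * Real.exp (-x) ≤ (x^2 * Real.sqrt (L^3)) * 1 :=
            mul_le_mul_of_nonneg_left hexp (by positivity)
        _ = x^2 * Real.sqrt (L^3) := by ring
        _ ≤ 81 * (Real.sqrt x * Real.sqrt (lam^3)) := hB
        _ = 81 * Real.sqrt x * Real.sqrt (lam^3) := by ring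
    exact aux_div3 hsl (by positivity) hsL (Real.sqrt_nonneg _) (by linarith [hfin])

lemma aux_NK {n : ℕ → ℕ} {q : ℝ} (hn : ∀ k, 1 ≤ n k) (hq : 1 < q)
    (hlac : ∀ k, q * (n k : ℝ) ≤ (n (k+1) : ℝ)) : ∀ k, k + 1 ≤ n k := by
  intro k
  induction k with
  | zero => exact hn 0
  | succ m ih =>
    have h1 : (n m : ℝ) < q * n m := by
      have : (1:ℝ) ≤ (n m : ℝ) := by exact_mod_cast hn m
      nlinarith
    have h2 : (n m : ℝ) < (n (m+1) : ℝ) := lt_of_lt_of_le h1 (hlac m)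
    have := Nat.cast_lt.mp h2
    omega

lemma aux_pow {n : ℕ → ℕ} {q : ℝ} (hq : 1 < q)
    (hlac : ∀ k, q * (n k : ℝ) ≤ (n (k+1) : ℝ)) :
    ∀ i j, q^j * (n i : ℝ) ≤ (n (i+j) : ℝ) := by
  intro i j
  induction j with
  | zero => simp
  | succ m ih =>
    have hq0 : 0 < q := lt_trans one_pos hq
    calc q^(m+1) * (n i : ℝ) = q * (q^m * n i) := by ring
      _ ≤ q * (n (i+m) : ℝ) := mul_le_mul_of_nonneg_left ih hq0.le
      _ ≤ (n (i+m+1) : ℝ) := hlac (i+m)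

lemma aux_sqrt_pow {x : ℝ} (hx : 0 ≤ x) (j : ℕ) :
    Real.sqrt (x^j) = Real.sqrt x ^ j := by
  induction j with
  | zero => simp
  | succ i ih => rw [pow_succ, Real.sqrt_mul (by positivity), ih, pow_succ]

lemma aux_lacG {n : ℕ → ℕ} {q : ℝ} (hq : 1 < q) (hn : ∀ k, 1 ≤ n k)
    (hlac : ∀ k, q * (n k : ℝ) ≤ (n (k+1) : ℝ)) {t : ℝ} (ht : 0 < t) :
    Summable (fun k => min (Real.sqrt ((n k : ℝ) * t)) (Real.sqrt ((n k : ℝ) * t))⁻¹) ∧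
    ∑' k, min (Real.sqrt ((n k : ℝ) * t)) (Real.sqrt ((n k : ℝ) * t))⁻¹
      ≤ 2 * (1 - (Real.sqrt q)⁻¹)⁻¹ := by
  have hq0 : 0 < q := lt_trans one_pos hq
  set θ := (Real.sqrt q)⁻¹ with hθ
  have hsq1 : 1 < Real.sqrt q := by
    rw [show (1:ℝ) = Real.sqrt 1 by simp]
    exact Real.sqrt_lt_sqrt (by norm_num) hq
  have hθ0 : 0 ≤ θ := by positivity
  have hθ1 : θ < 1 := by rw [hθ]; exact inv_lt_one_of_one_lt₀ hsq1
  set m : ℕ → ℝ := fun k => min (Real.sqrt ((n k : ℝ) * t)) (Real.sqrt ((n k : ℝ) * t))⁻¹ with hm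
  have hm0 : ∀ k, 0 ≤ m k := fun k => le_min (Real.sqrt_nonneg _) (by positivity)
  -- existence of k₀
  have hex : ∃ k, 1 ≤ (n k : ℝ) * t := by
    obtain ⟨N, hN⟩ := exists_nat_ge (1/t)
    refine ⟨N, ?_⟩
    have h1 : (N:ℝ) ≤ (n N : ℝ) := by exact_mod_cast le_trans (Nat.le_succ N) (aux_NK hn hq hlac N)
    have h2 : 1/t ≤ (n N : ℝ) := le_trans hN h1
    rw [div_le_iff₀ ht] at h2
    linarith
  set k₀ := Nat.find hex with hk₀def
  have hk₀ : 1 ≤ (n k₀ : ℝ) * t := Nat.find_spec hex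
  have hbelow : ∀ k, k < k₀ → (n k : ℝ) * t < 1 := by
    intro k hk
    have := Nat.find_min hex hk
    linarith [lt_of_not_ge this]
  -- tail bound
  have htail : ∀ i : ℕ, m (i + k₀) ≤ θ^i := by
    intro i
    have hp := aux_pow hq hlac k₀ i
    have h1 : q^i ≤ (n (k₀+i) : ℝ) * t := by
      have h2 : q^i * ((n k₀ : ℝ) * t) ≤ (n (k₀+i) : ℝ) * t := by
        have := mul_le_mul_of_nonneg_right hp ht.le
        calc q^i * ((n k₀:ℝ)*t) = q^i * (n k₀:ℝ) * t := by ring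
          _ ≤ (n (k₀+i):ℝ) * t := this
      nlinarith [pow_pos hq0 i, hk₀]
    have hsqrt : Real.sqrt q ^ i ≤ Real.sqrt ((n (k₀+i) : ℝ) * t) := by
      have := Real.sqrt_le_sqrt h1
      rwa [aux_sqrt_pow hq0.le i] at this
    have hpos : (0:ℝ) < Real.sqrt q ^ i := by positivity
    have h3 : (Real.sqrt ((n (k₀+i) : ℝ) * t))⁻¹ ≤ θ^i := by
      rw [hθ, inv_pow]
      exact inv_anti₀ hpos hsqrt
    calc m (i + k₀) ≤ (Real.sqrt ((n (i + k₀) : ℝ) * t))⁻¹ := min_le_right _ _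
      _ = (Real.sqrt ((n (k₀+i) : ℝ) * t))⁻¹ := by rw [add_comm]
      _ ≤ θ^i := h3
  have hsum_tail : Summable (fun i => m (i + k₀)) :=
    Summable.of_nonneg_of_le (fun i => hm0 _) htail (summable_geometric_of_lt_one hθ0 hθ1)
  have hsummable : Summable m := (summable_nat_add_iff k₀).1 hsum_tail
  refine ⟨hsummable, ?_⟩
  have hsplit := Summable.sum_add_tsum_nat_add k₀ hsummable
  have hgeo : ∑' i : ℕ, θ^i = (1-θ)⁻¹ := tsum_geometric_of_lt_one hθ0 hθ1
  have hhead : ∑ k ∈ Finset.range k₀, m k ≤ (1-θ)⁻¹ := by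
    have hh : ∀ k ∈ Finset.range k₀, m k ≤ θ^(k₀-1-k) := by
      intro k hk
      rw [Finset.mem_range] at hk
      have hkk : k + (k₀-1-k) = k₀-1 := by omega
      have hp := aux_pow hq hlac k (k₀-1-k)
      rw [hkk] at hp
      have hb : (n (k₀-1) : ℝ) * t < 1 := hbelow _ (by omega)
      have h1 : q^(k₀-1-k) * ((n k : ℝ) * t) < 1 := by
        have := mul_le_mul_of_nonneg_right hp ht.le
        nlinarith [this, hb]
      have h2 : (n k : ℝ) * t ≤ (q^(k₀-1-k))⁻¹ := by
        rw [← one_div, le_div_iff₀ (pow_pos hq0 _)]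
        nlinarith [h1]
      calc m k ≤ Real.sqrt ((n k : ℝ) * t) := min_le_left _ _
        _ ≤ Real.sqrt ((q^(k₀-1-k))⁻¹) := Real.sqrt_le_sqrt h2
        _ = θ^(k₀-1-k) := by
            rw [Real.sqrt_inv, aux_sqrt_pow hq0.le, hθ, inv_pow]
    calc ∑ k ∈ Finset.range k₀, m k ≤ ∑ k ∈ Finset.range k₀, θ^(k₀-1-k) := Finset.sum_le_sum hh
      _ = ∑ k ∈ Finset.range k₀, θ^k := Finset.sum_range_reflect (fun j => θ^j) k₀
      _ ≤ ∑' k : ℕ, θ^k := Summable.sum_le_tsum _ (fun i _ => by positivity)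
            (summable_geometric_of_lt_one hθ0 hθ1)
      _ = (1-θ)⁻¹ := hgeo
  have htailsum : ∑' i : ℕ, m (i + k₀) ≤ (1-θ)⁻¹ := by
    rw [← hgeo]
    exact Summable.tsum_le_tsum htail hsum_tail (summable_geometric_of_lt_one hθ0 hθ1)
  rw [← hsplit]
  linarith

lemma aux_sect {ρ₀ ρ₁ φ w : ℝ} (h0 : 0 ≤ ρ₀) (h01 : ρ₀ ≤ ρ₁) (h11 : ρ₁ ≤ 1) (hw : 0 ≤ w) :
    volume {z : ℂ | ρ₀ ≤ ‖z‖ ∧ ‖z‖ < ρ₁ ∧ |Complex.arg z - φ| ≤ w}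
      ≤ ENNReal.ofReal (2*w*(ρ₁-ρ₀)) := by
  set E := {z : ℂ | ρ₀ ≤ ‖z‖ ∧ ‖z‖ < ρ₁ ∧ |Complex.arg z - φ| ≤ w} with hE
  have habs : Measurable (fun z : ℂ => ‖z‖) := continuous_norm.measurable
  have hEm : MeasurableSet E := by
    have : E = {z : ℂ | ρ₀ ≤ ‖z‖} ∩ ({z : ℂ | ‖z‖ < ρ₁}
        ∩ {z : ℂ | |Complex.arg z - φ| ≤ w}) := rfl
    rw [this]
    exact (measurableSet_le measurable_const habs).inter
      ((measurableSet_lt habs measurable_const).inter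
        (measurableSet_le ((Complex.measurable_arg.sub measurable_const).abs) measurable_const))
  have hsub : E ⊆ Metric.ball (0:ℂ) 1 := by
    intro z hz
    rw [Metric.mem_ball, Complex.dist_eq, sub_zero]
    exact lt_of_lt_of_le hz.2.1 h11
  have hfin : volume E ≠ ⊤ :=
    ne_of_lt (lt_of_le_of_lt (measure_mono hsub) measure_ball_lt_top)
  set E' : Set (ℝ×ℝ) := (Set.Ico ρ₀ ρ₁) ×ˢ (Set.Icc (φ-w) (φ+w)) with hE'
  have hE'm : MeasurableSet E' := measurableSet_Ico.prod measurableSet_Icc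
  have htarget : MeasurableSet Complex.polarCoord.target := by
    rw [Complex.polarCoord_target]
    exact measurableSet_Ioi.prod measurableSet_Ioo
  have hcongr : Set.EqOn (fun p : ℝ×ℝ => p.1 • (E.indicator (1 : ℂ → ℝ) (Complex.polarCoord.symm p)))
      (E'.indicator (fun q : ℝ×ℝ => q.1)) Complex.polarCoord.target := by
    intro p hp
    rw [Complex.polarCoord_target] at hp
    obtain ⟨hp1, hp2⟩ := hp
    rw [Set.mem_Ioi] at hp1
    rw [Set.mem_Ioo] at hp2
    have habs' : ‖Complex.polarCoord.symm p‖ = p.1 := by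
      rw [Complex.norm_polarCoord_symm, abs_of_pos hp1]
    have harg : Complex.arg (Complex.polarCoord.symm p) = p.2 := by
      rw [Complex.polarCoord_symm_apply, Complex.ofReal_cos, Complex.ofReal_sin]
      exact Complex.arg_mul_cos_add_sin_mul_I hp1 ⟨hp2.1, hp2.2.le⟩
    have hmem : Complex.polarCoord.symm p ∈ E ↔ p ∈ E' := by
      rw [hE, hE', Set.mem_setOf_eq, habs', harg, Set.mem_prod, Set.mem_Ico, Set.mem_Icc,
        abs_le]
      constructor
      · rintro ⟨h1, h2, h3⟩; exact ⟨⟨h1, h2⟩, by constructor <;> linarith [h3.1, h3.2]⟩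
      · rintro ⟨⟨h1, h2⟩, h3, h4⟩; exact ⟨h1, h2, by constructor <;> linarith⟩
    show p.1 • (E.indicator (1 : ℂ → ℝ) (Complex.polarCoord.symm p))
        = E'.indicator (fun q : ℝ×ℝ => q.1) p
    rw [Set.indicator_apply, Set.indicator_apply]
    simp only [hmem]
    by_cases hin : p ∈ E'
    · rw [if_pos hin, if_pos hin]; simp
    · rw [if_neg hin, if_neg hin]; simp
  have key : (volume E).toReal ≤ 2*w*(ρ₁-ρ₀) := by
    set s := Set.Ioi (0:ℝ) ∩ Set.Ico ρ₀ ρ₁ with hs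
    set tt := Set.Ioo (-π) π ∩ Set.Icc (φ-w) (φ+w) with htt
    have hstep : (volume E).toReal = (∫ x in s, x) * (∫ y in tt, (1:ℝ)) := by
      calc (volume E).toReal
          = ∫ z, E.indicator (1 : ℂ → ℝ) z := (MeasureTheory.integral_indicator_one hEm).symm
        _ = ∫ p in Complex.polarCoord.target,
              p.1 • (E.indicator (1:ℂ→ℝ) (Complex.polarCoord.symm p)) :=
            (Complex.integral_comp_polarCoord_symm (E.indicator (1 : ℂ → ℝ))).symm
        _ = ∫ p in Complex.polarCoord.target, E'.indicator (fun q : ℝ×ℝ => q.1) p :=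
            MeasureTheory.setIntegral_congr_fun htarget hcongr
        _ = ∫ p in Complex.polarCoord.target ∩ E', p.1 :=
            MeasureTheory.setIntegral_indicator hE'm
        _ = ∫ p in s ×ˢ tt, p.1 := by
            rw [Complex.polarCoord_target, hE', Set.prod_inter_prod]
        _ = (∫ x in s, x) * (∫ y in tt, (1:ℝ)) := by
            rw [Measure.volume_eq_prod,
              ← MeasureTheory.setIntegral_prod_mul (fun x : ℝ => x) (fun _ : ℝ => (1:ℝ)) s tt]
            simp
    rw [hstep]
    have hsm : MeasurableSet s := measurableSet_Ioi.inter measurableSet_Ico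
    have hsfin : volume s < ⊤ := lt_of_le_of_lt (measure_mono (Set.inter_subset_right))
      (by rw [Real.volume_Ico]; exact ENNReal.ofReal_lt_top)
    have hsvol : (volume s).toReal ≤ ρ₁ - ρ₀ := by
      have h1 : volume s ≤ ENNReal.ofReal (ρ₁ - ρ₀) := by
        rw [← Real.volume_Ico]; exact measure_mono Set.inter_subset_right
      exact ENNReal.toReal_le_of_le_ofReal (by linarith) h1
    have hIs : ∫ x in s, x ≤ ρ₁ - ρ₀ := by
      have hb := MeasureTheory.norm_setIntegral_le_of_norm_le_const (f := fun x : ℝ => x)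
        (C := 1) hsfin ?_
      · rw [Real.norm_eq_abs] at hb
        calc ∫ x in s, x ≤ |∫ x in s, x| := le_abs_self _
          _ ≤ 1 * (volume s).toReal := hb
          _ ≤ ρ₁ - ρ₀ := by linarith [hsvol]
      · intro x hx
        rw [Real.norm_eq_abs, abs_of_pos hx.1]
        exact le_trans hx.2.2.le h11
    have hIs0 : 0 ≤ ∫ x in s, x :=
      MeasureTheory.setIntegral_nonneg hsm (fun x hx => (le_of_lt hx.1))
    have hIt : ∫ y in tt, (1:ℝ) = (volume tt).toReal := by
      rw [MeasureTheory.setIntegral_const]; simp; rfl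
    have hIt0 : 0 ≤ ∫ y in tt, (1:ℝ) := by rw [hIt]; positivity
    have hItle : ∫ y in tt, (1:ℝ) ≤ 2*w := by
      rw [hIt]
      have h1 : volume tt ≤ ENNReal.ofReal (2*w) := by
        rw [show (2:ℝ)*w = (φ+w) - (φ-w) by ring, ← Real.volume_Icc]
        exact measure_mono Set.inter_subset_right
      exact ENNReal.toReal_le_of_le_ofReal (by linarith) h1
    calc (∫ x in s, x) * (∫ y in tt, (1:ℝ)) ≤ (ρ₁-ρ₀) * (2*w) :=
          mul_le_mul hIs hItle hIt0 (by linarith)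
      _ = 2*w*(ρ₁-ρ₀) := by ring
  exact (ENNReal.le_ofReal_iff_toReal_le hfin (by nlinarith)).2 key

lemma aux_PW (n : ℕ → ℕ) (a : ℕ → ℂ) (q : ℝ)
    (hn : ∀ k, 1 ≤ n k) (hq : 1 < q)
    (hlac : ∀ k, q * (n k : ℝ) ≤ (n (k + 1) : ℝ))
    (hsum : Summable fun k => ‖a k‖ ^ 2 * (Real.log (n k)) ^ 3 / (n k : ℝ) ^ 4) :
    ∃ C₁ : ℝ, 0 ≤ C₁ ∧ ∀ z : ℂ, ‖z‖ < 1 →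
      ‖∑' k, a k * z ^ (n k)‖ ≤ C₁ * ((1 - ‖z‖)^2)⁻¹
        * (Real.sqrt ((Real.log (Real.exp 1 / (1 - ‖z‖)))^3))⁻¹ := by
  set S := ∑' k, ‖a k‖ ^ 2 * (Real.log (n k)) ^ 3 / (n k : ℝ) ^ 4 with hS
  have hS0 : 0 ≤ S := tsum_nonneg (fun k => by positivity)
  set D := Real.sqrt S + ‖a 0‖ + ‖a 1‖ with hD
  have hD0 : 0 ≤ D := by positivity
  set B := 2 * (1 - (Real.sqrt q)⁻¹)⁻¹ with hB
  have hsq1 : 1 < Real.sqrt q := by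
    rw [show (1:ℝ) = Real.sqrt 1 by simp]
    exact Real.sqrt_lt_sqrt (by norm_num) hq
  have hB0 : 0 ≤ B := by
    have : (Real.sqrt q)⁻¹ < 1 := inv_lt_one_of_one_lt₀ hsq1
    have h2 : 0 < 1 - (Real.sqrt q)⁻¹ := by linarith
    positivity
  refine ⟨81 * D * B, by positivity, ?_⟩
  intro z hz
  set r := ‖z‖ with hr
  have hr0 : 0 ≤ r := norm_nonneg z
  set t := 1 - r with ht'
  have ht : 0 < t := by simp only [ht']; linarith
  have ht1 : t ≤ 1 := by simp only [ht']; linarith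
  have hCB : ∀ k, ‖a k‖ ≤ D * (n k : ℝ)^2 / Real.sqrt ((max 1 (Real.log (n k)))^3) := by
    intro k
    have hnk1 : (1:ℝ) ≤ (n k : ℝ) := by exact_mod_cast hn k
    by_cases h3 : 3 ≤ n k
    · have h3' : (3:ℝ) ≤ (n k : ℝ) := by exact_mod_cast h3
      have hlog1 : 1 ≤ Real.log (n k) := by
        have he : Real.exp 1 ≤ 3 := by
          have := Real.exp_one_lt_d9; linarith
        calc 1 = Real.log (Real.exp 1) := (Real.log_exp 1).symm
          _ ≤ Real.log (n k) := Real.log_le_log (Real.exp_pos 1) (le_trans he h3')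
      have hmax : max 1 (Real.log (n k)) = Real.log (n k) := max_eq_right hlog1
      rw [hmax]
      have hterm : ‖a k‖ ^ 2 * (Real.log (n k)) ^ 3 / (n k : ℝ) ^ 4 ≤ S := by
        apply Summable.le_tsum hsum k
        intro j _; positivity
      have hlp : 0 < (Real.log (n k))^3 := by positivity
      have hnp : 0 < (n k : ℝ)^4 := by positivity
      have h2 : ‖a k‖^2 ≤ S * ((n k:ℝ)^4 / (Real.log (n k))^3) := by
        rw [div_le_iff₀ hnp] at hterm
        rw [← mul_div_assoc, le_div_iff₀ hlp]
        linarith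
      calc ‖a k‖ = Real.sqrt (‖a k‖^2) := (Real.sqrt_sq (norm_nonneg _)).symm
        _ ≤ Real.sqrt (S * ((n k:ℝ)^4 / (Real.log (n k))^3)) := Real.sqrt_le_sqrt h2
        _ = Real.sqrt S * (Real.sqrt ((n k:ℝ)^4) / Real.sqrt ((Real.log (n k))^3)) := by
            rw [Real.sqrt_mul hS0, Real.sqrt_div' _ hlp.le]
        _ = Real.sqrt S * ((n k:ℝ)^2 / Real.sqrt ((Real.log (n k))^3)) := by
            rw [show (n k:ℝ)^4 = ((n k:ℝ)^2)^2 by ring, Real.sqrt_sq (by positivity)]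
        _ ≤ D * ((n k:ℝ)^2 / Real.sqrt ((Real.log (n k))^3)) := by
            apply mul_le_mul_of_nonneg_right _ (by positivity)
            simp only [hD]
            linarith [norm_nonneg (a 0), norm_nonneg (a 1)]
        _ = D * (n k:ℝ)^2 / Real.sqrt ((Real.log (n k))^3) := (mul_div_assoc _ _ _).symm
    · push_neg at h3
      have hk1 : k ≤ 1 := by
        have := aux_NK hn hq hlac k
        omega
      have hnk2 : (n k : ℝ) ≤ 2 := by exact_mod_cast (by omega : n k ≤ 2)
      have hlog2 : Real.log (n k) ≤ 1 := by
        calc Real.log (n k) ≤ Real.log 2 := Real.log_le_log (by linarith) hnk2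
          _ ≤ 1 := by linarith [Real.log_two_lt_d9]
      have hmax : max 1 (Real.log (n k)) = 1 := max_eq_left hlog2
      rw [hmax]
      have hsq : Real.sqrt ((1:ℝ)^3) = 1 := by norm_num
      rw [hsq]
      have haD : ‖a k‖ ≤ D := by
        interval_cases k
        · simp only [hD]; linarith [Real.sqrt_nonneg S, norm_nonneg (a 1)]
        · simp only [hD]; linarith [Real.sqrt_nonneg S, norm_nonneg (a 0)]
      calc ‖a k‖ ≤ D := haD
        _ ≤ D * (n k:ℝ)^2 := le_mul_of_one_le_right hD0 (one_le_pow₀ hnk1)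
        _ = D * (n k:ℝ)^2 / 1 := (div_one _).symm
  -- main estimate
  have hLeq : Real.log (Real.exp 1 / t) = 1 - Real.log t := by
    rw [Real.log_div (Real.exp_ne_zero 1) (ne_of_gt ht), Real.log_exp]
  have hlogt0 : Real.log t ≤ 0 := Real.log_nonpos ht.le ht1
  have hL1 : (1:ℝ) ≤ 1 - Real.log t := by linarith
  set SL := Real.sqrt ((1 - Real.log t)^3) with hSL
  have hSL0 : 0 < SL := Real.sqrt_pos.2 (by positivity)
  obtain ⟨hGsum, hGle⟩ := aux_lacG hq hn hlac ht
  set mfn := fun k => min (Real.sqrt ((n k:ℝ)*t)) (Real.sqrt ((n k:ℝ)*t))⁻¹ with hmfn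
  have hrpow : ∀ k, r ^ (n k) ≤ Real.exp (-((n k:ℝ)*t)) := by
    intro k
    calc r^(n k) ≤ (Real.exp (-t))^(n k) :=
          pow_le_pow_left₀ hr0 (by linarith [Real.add_one_le_exp (-t)]) _
      _ = Real.exp (-((n k:ℝ)*t)) := by rw [← Real.exp_nat_mul]; congr 1; ring
  have hterm : ∀ k, ‖a k * z ^ (n k)‖ ≤ (81 * D * (t^2)⁻¹ * SL⁻¹) * mfn k := by
    intro k
    rw [norm_mul, norm_pow]
    calc ‖a k‖ * r ^ (n k)
        ≤ (D * (n k:ℝ)^2 / Real.sqrt ((max 1 (Real.log (n k)))^3)) * Real.exp (-((n k:ℝ)*t)) :=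
          mul_le_mul (hCB k) (hrpow k) (by positivity) (by positivity)
      _ = D * ((n k:ℝ)^2 * Real.exp (-((n k:ℝ)*t)) / Real.sqrt ((max 1 (Real.log (n k)))^3)) := by
          ring
      _ ≤ D * (81 * (t^2)⁻¹ * SL⁻¹ * mfn k) :=
          mul_le_mul_of_nonneg_left (aux_star (hn k) ht ht1) hD0
      _ = (81 * D * (t^2)⁻¹ * SL⁻¹) * mfn k := by ring
  have hsum2 : Summable (fun k => ‖a k * z ^ (n k)‖) :=
    Summable.of_nonneg_of_le (fun k => norm_nonneg _) hterm (hGsum.mul_left _)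
  rw [hLeq]
  calc ‖∑' k, a k * z ^ (n k)‖ ≤ ∑' k, ‖a k * z ^ (n k)‖ := norm_tsum_le_tsum_norm hsum2
    _ ≤ ∑' k, (81 * D * (t^2)⁻¹ * SL⁻¹) * mfn k :=
        Summable.tsum_le_tsum hterm hsum2 (hGsum.mul_left _)
    _ = (81 * D * (t^2)⁻¹ * SL⁻¹) * ∑' k, mfn k := tsum_mul_left
    _ ≤ (81 * D * (t^2)⁻¹ * SL⁻¹) * B := mul_le_mul_of_nonneg_left hGle (by positivity)
    _ = (81 * D * B) * (t^2)⁻¹ * SL⁻¹ := by ring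

/-- The Carleson square with respect to a point `a` of the unit disc. -/
noncomputable def carlesonSq (a : ℂ) : Set ℂ :=
  if a = 0 then ball (0 : ℂ) 1 else
    {z : ℂ | ‖a‖ < ‖z‖ ∧ ‖z‖ < 1 ∧
      |Complex.arg z - Complex.arg a| ≤ (1 - ‖a‖) / 2}

set_option maxHeartbeats 2000000 in
theorem stmt5 (n : ℕ → ℕ) (a : ℕ → ℂ)
    (hn : ∀ k, 1 ≤ n k)
    (hlac : ∃ q : ℝ, 1 < q ∧ ∀ k, q * (n k : ℝ) ≤ (n (k + 1) : ℝ))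
    (hsum : Summable fun k => ‖a k‖ ^ 2 * (Real.log (n k)) ^ 3 / (n k : ℝ) ^ 4) :
    ∃ C : ℝ, ∀ b ∈ ball (0 : ℂ) 1,
      (Real.log (Real.exp 1 / (1 - ‖b‖))) ^ 2 / (1 - ‖b‖) *
        (π⁻¹ * ∫ z in carlesonSq b,
          ‖∑' k, a k * z ^ (n k)‖ ^ 2 * (1 - ‖z‖ ^ 2) ^ 3 ∂MeasureTheory.volume) ≤ C := by
  obtain ⟨q, hq1, hq⟩ := hlac
  obtain ⟨C₁, hC₁0, hPW⟩ := aux_PW n a q hn hq1 hq hsum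
  refine ⟨168 * C₁^2, ?_⟩
  intro b hb
  rw [mem_ball_zero_iff] at hb
  have hb0' : 0 ≤ ‖b‖ := norm_nonneg b
  set T := 1 - ‖b‖ with hT
  have hT0 : 0 < T := by simp only [hT]; linarith
  have hT1 : T ≤ 1 := by simp only [hT]; linarith
  set L := Real.log (Real.exp 1 / T) with hLdef
  have hLeq : L = 1 - Real.log T := by
    rw [hLdef, Real.log_div (Real.exp_ne_zero 1) (ne_of_gt hT0), Real.log_exp]
  have hL1 : (1:ℝ) ≤ L := by
    rw [hLeq]; linarith [Real.log_nonpos hT0.le hT1]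
  have hL0 : (0:ℝ) < L := lt_of_lt_of_le one_pos hL1
  set g : ℂ → ℝ := fun z => ‖∑' k, a k * z ^ (n k)‖ ^ 2 * (1 - ‖z‖ ^ 2) ^ 3 with hg
  set φ := Complex.arg b with hφ
  set w : ℝ := if b = 0 then π else T/2 with hw
  have hw0 : 0 < w := by
    rw [hw]; split
    · exact Real.pi_pos
    · positivity
  have hwT : 2*w ≤ 7*T := by
    rw [hw]; split_ifs with hb0
    · simp only [hT, hb0, norm_zero, sub_zero]
      linarith [Real.pi_lt_d2]
    · linarith
  -- membership facts
  have hmem : ∀ z ∈ carlesonSq b, ‖z‖ < 1 ∧ ‖b‖ ≤ ‖z‖ ∧ |Complex.arg z - φ| ≤ w := by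
    intro z hz
    unfold carlesonSq at hz
    by_cases hb0 : b = 0
    · rw [if_pos hb0] at hz
      rw [mem_ball_zero_iff] at hz
      refine ⟨hz, by simp [hb0], ?_⟩
      rw [hw, if_pos hb0, hφ, hb0, Complex.arg_zero, sub_zero]
      exact Complex.abs_arg_le_pi z
    · rw [if_neg hb0] at hz
      obtain ⟨h1, h2, h3⟩ := hz
      refine ⟨h2, h1.le, ?_⟩
      rw [hw, if_neg hb0, hφ]
      simp only [hT]
      exact h3
  have hSbm : MeasurableSet (carlesonSq b) := by
    unfold carlesonSq
    split_ifs
    · exact measurableSet_ball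
    · have habs : Measurable (fun z : ℂ => ‖z‖) := continuous_norm.measurable
      exact (measurableSet_lt measurable_const habs).inter
        ((measurableSet_lt habs measurable_const).inter
          (measurableSet_le ((Complex.measurable_arg.sub measurable_const).abs) measurable_const))
  -- shells
  set tj : ℕ → ℝ := fun j => T / 2^j with htj
  have htj0 : ∀ j, 0 < tj j := fun j => by rw [htj]; positivity
  have htjT : ∀ j, tj j ≤ T := fun j => by
    rw [htj]
    calc T / 2^j ≤ T / 1 := by
          apply div_le_div_of_nonneg_left hT0.le one_pos -- maybe wrong arg order; fix below
          exact one_le_pow₀ (by norm_num)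
      _ = T := div_one T
  have htjhalf : ∀ j, tj (j+1) = tj j / 2 := by
    intro j; rw [htj]; simp only []; rw [pow_succ]; ring
  set Aj : ℕ → Set ℂ := fun j => carlesonSq b ∩ {z : ℂ | tj (j+1) < 1 - ‖z‖ ∧ 1 - ‖z‖ ≤ tj j} with hAj
  have hcover : carlesonSq b ⊆ ⋃ j, Aj j := by
    intro z hz
    obtain ⟨hz1, hz2, _⟩ := hmem z hz
    have htz0 : 0 < 1 - ‖z‖ := by linarith
    have htzT : 1 - ‖z‖ ≤ T := by simp only [hT]; linarith
    have hex : ∃ j : ℕ, tj (j+1) < 1 - ‖z‖ := by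
      obtain ⟨N, hN⟩ := pow_unbounded_of_one_lt (T / (1 - ‖z‖)) (by norm_num : (1:ℝ) < 2)
      refine ⟨N, ?_⟩
      rw [htjhalf]
      have h1 : T / 2^N < 1 - ‖z‖ := by
        rw [div_lt_iff₀ (by positivity)]
        rw [div_lt_iff₀ htz0] at hN
        linarith [hN]
      have h2 : tj N / 2 < tj N := by linarith [htj0 N]
      calc tj N / 2 < tj N := h2
        _ = T / 2^N := rfl
        _ < 1 - ‖z‖ := h1
    have hspec : tj (Nat.find hex + 1) < 1 - ‖z‖ := Nat.find_spec hex
    have hup : 1 - ‖z‖ ≤ tj (Nat.find hex) := by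
      rcases Nat.eq_zero_or_pos (Nat.find hex) with h0 | hpos
      · rw [h0]
        show 1 - ‖z‖ ≤ T / 2^0
        simpa using htzT
      · have hm : Nat.find hex - 1 < Nat.find hex := by omega
        have h5 := Nat.find_min hex hm
        push_neg at h5
        have h6 : 1 - ‖z‖ ≤ tj (Nat.find hex - 1 + 1) := h5
        have h7 : Nat.find hex - 1 + 1 = Nat.find hex := by omega
        rwa [h7] at h6
    exact Set.mem_iUnion.2 ⟨Nat.find hex, hz, hspec, hup⟩
  -- sector volume bound
  have hlog2 : 0 < Real.log 2 := Real.log_pos (by norm_num)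
  have hLjpos : ∀ j : ℕ, 0 < L + j * Real.log 2 := by
    intro j
    have : (0:ℝ) ≤ j * Real.log 2 := by positivity
    linarith
  have hsect : ∀ j : ℕ, MeasureTheory.volume (Aj j) ≤ ENNReal.ofReal ((7*T/2) * tj j) := by
    intro j
    have hsub : Aj j ⊆ {z : ℂ | (1 - tj j) ≤ ‖z‖ ∧ ‖z‖ < (1 - tj (j+1)) ∧
        |Complex.arg z - φ| ≤ w} := by
      rintro z ⟨hzS, hz1, hz2⟩
      obtain ⟨_, _, harg⟩ := hmem z hzS
      refine ⟨?_, ?_, harg⟩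
      · linarith
      · linarith
    have h01 : 1 - tj j ≤ 1 - tj (j+1) := by
      rw [htjhalf j]; linarith [htj0 j]
    calc MeasureTheory.volume (Aj j)
        ≤ MeasureTheory.volume {z : ℂ | (1 - tj j) ≤ ‖z‖ ∧
            ‖z‖ < (1 - tj (j+1)) ∧ |Complex.arg z - φ| ≤ w} :=
          MeasureTheory.measure_mono hsub
      _ ≤ ENNReal.ofReal (2*w*((1 - tj (j+1)) - (1 - tj j))) :=
          aux_sect (by linarith [htjT j]) h01 (by linarith [htj0 (j+1)]) hw0.le
      _ ≤ ENNReal.ofReal ((7*T/2) * tj j) := by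
          apply ENNReal.ofReal_le_ofReal
          rw [htjhalf j, show 2*w*(1 - tj j/2 - (1 - tj j)) = w * tj j by ring]
          exact mul_le_mul_of_nonneg_right (by linarith : w ≤ 7*T/2) (htj0 j).le
  have hLj : ∀ j : ℕ, Real.log (Real.exp 1 / tj j) = L + j * Real.log 2 := by
    intro j
    have h2j : (0:ℝ) < 2^j := by positivity
    have he : Real.exp 1 / tj j = (Real.exp 1 / T) * 2^j := by
      rw [htj]; field_simp
    rw [he, Real.log_mul (by positivity) (ne_of_gt h2j), Real.log_pow, hLdef]
  -- pointwise bound on shells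
  have hgb : ∀ j : ℕ, ∀ z ∈ Aj j, g z ≤ 16 * C₁^2 / (tj j * (L + j*Real.log 2)^3) := by
    intro j z hzA
    obtain ⟨hzS, hz1, hz2⟩ := hzA
    simp only [hg]
    have htz0 : 0 < 1 - ‖z‖ := lt_trans (htj0 (j+1)) hz1
    have hz1' : ‖z‖ < 1 := by linarith
    set tz := 1 - ‖z‖ with htz
    set X := Real.log (Real.exp 1 / tz) with hX
    have hX1 : 1 ≤ X := by
      rw [hX, Real.log_div (Real.exp_ne_zero 1) (ne_of_gt htz0), Real.log_exp]
      linarith [Real.log_nonpos htz0.le (by linarith [norm_nonneg z] : tz ≤ 1)]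
    have hX0 : 0 < X := lt_of_lt_of_le one_pos hX1
    have hXj : L + j*Real.log 2 ≤ X := by
      rw [← hLj j, hX]
      apply Real.log_le_log (by positivity)
      apply div_le_div_of_nonneg_left (Real.exp_pos 1).le htz0 hz2
    have hA := hPW z hz1'
    have hA2 : ‖∑' k, a k * z ^ (n k)‖^2 ≤ C₁^2 * (((tz^2)⁻¹)^2 * (X^3)⁻¹) := by
      have h1 := pow_le_pow_left₀ (norm_nonneg _) hA 2
      have h2 : (C₁ * ((tz)^2)⁻¹ * (Real.sqrt (X^3))⁻¹)^2
          = C₁^2 * (((tz^2)⁻¹)^2 * ((Real.sqrt (X^3))⁻¹)^2) := by ring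
      have h3 : ((Real.sqrt (X^3))⁻¹)^2 = (X^3)⁻¹ := by
        rw [inv_pow, Real.sq_sqrt (by positivity)]
      rw [h2, h3] at h1
      exact h1
    have hfac : (1 - ‖z‖^2)^3 ≤ 8 * tz^3 := by
      have h1 : 1 - ‖z‖^2 ≤ 2*tz := by nlinarith [norm_nonneg z]
      have h2 : (0:ℝ) ≤ 1 - ‖z‖^2 := by nlinarith [norm_nonneg z]
      calc (1-‖z‖^2)^3 ≤ (2*tz)^3 := pow_le_pow_left₀ h2 h1 3
        _ = 8*tz^3 := by ring
    have hgz : ‖∑' k, a k * z ^ (n k)‖^2 * (1 - ‖z‖^2)^3 ≤ 8 * C₁^2 / (tz * X^3) := by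
      have h2 : (0:ℝ) ≤ 1 - ‖z‖^2 := by nlinarith [norm_nonneg z]
      calc ‖∑' k, a k * z ^ (n k)‖^2 * (1 - ‖z‖^2)^3
          ≤ (C₁^2 * (((tz^2)⁻¹)^2 * (X^3)⁻¹)) * (8 * tz^3) :=
            mul_le_mul hA2 hfac (pow_nonneg h2 3) (by positivity)
        _ = 8 * C₁^2 / (tz * X^3) := by
            field_simp
    have hLj0 := hLjpos j
    have htzj : tj j / 2 < tz := by rw [← htjhalf j]; exact hz1
    have hd : (tj j / 2) * (L + j*Real.log 2)^3 ≤ tz * X^3 := by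
      apply mul_le_mul htzj.le (pow_le_pow_left₀ hLj0.le hXj 3) (by positivity) htz0.le
    calc ‖∑' k, a k * z ^ (n k)‖^2 * (1 - ‖z‖^2)^3 ≤ 8 * C₁^2 / (tz * X^3) := hgz
      _ ≤ 8 * C₁^2 / ((tj j / 2) * (L + j*Real.log 2)^3) := by
          apply div_le_div_of_nonneg_left (by positivity) (by positivity) hd
      _ = 16 * C₁^2 / (tj j * (L + j*Real.log 2)^3) := by
          rw [div_eq_div_iff (by positivity) (by positivity)]
          ring
  -- main split on measurability
  by_cases hAESM : MeasureTheory.AEStronglyMeasurable g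
      (MeasureTheory.volume.restrict (carlesonSq b))
  · have hnn : 0 ≤ᵐ[MeasureTheory.volume.restrict (carlesonSq b)] g := by
      filter_upwards [MeasureTheory.ae_restrict_mem hSbm] with z hz
      obtain ⟨hz1, _, _⟩ := hmem z hz
      have h2 : (0:ℝ) ≤ 1 - ‖z‖^2 := by nlinarith [norm_nonneg z]
      simp only [hg, Pi.zero_apply]
      positivity
    have hIeq : ∫ z in carlesonSq b, g z
        = (∫⁻ z in carlesonSq b, ENNReal.ofReal (g z)).toReal :=
      MeasureTheory.integral_eq_lintegral_of_nonneg_ae hnn hAESM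
    have hshell : ∀ j : ℕ, ∫⁻ z in Aj j, ENNReal.ofReal (g z)
        ≤ ENNReal.ofReal ((56*C₁^2*T) * (((L + j*Real.log 2)^3)⁻¹)) := by
      intro j
      have hLj0 := hLjpos j
      calc ∫⁻ z in Aj j, ENNReal.ofReal (g z)
          ≤ ∫⁻ _z in Aj j, ENNReal.ofReal (16*C₁^2/(tj j * (L + j*Real.log 2)^3)) :=
            MeasureTheory.setLIntegral_mono measurable_const
              (fun z hz => ENNReal.ofReal_le_ofReal (hgb j z hz))
        _ = ENNReal.ofReal (16*C₁^2/(tj j * (L + j*Real.log 2)^3)) * MeasureTheory.volume (Aj j) :=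
            MeasureTheory.setLIntegral_const _ _
        _ ≤ ENNReal.ofReal (16*C₁^2/(tj j * (L + j*Real.log 2)^3))
              * ENNReal.ofReal ((7*T/2) * tj j) := mul_le_mul_right (hsect j) _
        _ = ENNReal.ofReal ((16*C₁^2/(tj j * (L + j*Real.log 2)^3)) * ((7*T/2) * tj j)) :=
            (ENNReal.ofReal_mul (by positivity)).symm
        _ = ENNReal.ofReal ((56*C₁^2*T) * (((L + j*Real.log 2)^3)⁻¹)) := by
            congr 1
            field_simp [(htj0 j).ne']
            ring
    obtain ⟨hTsum0, hTle0⟩ := aux_tele hL1 (by linarith [Real.log_two_gt_d9] : (1:ℝ)/2 ≤ Real.log 2)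
    have heqf : (fun j : ℕ => ((L + Real.log 2 * (j:ℝ))^3)⁻¹)
        = (fun j : ℕ => ((L + (j:ℝ) * Real.log 2)^3)⁻¹) := by
      funext j; ring_nf
    rw [heqf] at hTsum0 hTle0
    have hchain : ∫⁻ z in carlesonSq b, ENNReal.ofReal (g z)
        ≤ ENNReal.ofReal (168*C₁^2*T/L^2) := by
      calc ∫⁻ z in carlesonSq b, ENNReal.ofReal (g z)
          ≤ ∫⁻ z in ⋃ j, Aj j, ENNReal.ofReal (g z) := lintegral_mono_set hcover
        _ ≤ ∑' j, ∫⁻ z in Aj j, ENNReal.ofReal (g z) := MeasureTheory.lintegral_iUnion_le _ _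
        _ ≤ ∑' (j : ℕ), ENNReal.ofReal ((56*C₁^2*T) * (((L + (j:ℝ)*Real.log 2)^3)⁻¹)) :=
            ENNReal.tsum_le_tsum hshell
        _ = ∑' (j : ℕ), ENNReal.ofReal (56*C₁^2*T) * ENNReal.ofReal (((L + (j:ℝ)*Real.log 2)^3)⁻¹) := by
            congr 1
            funext j
            rw [ENNReal.ofReal_mul (by positivity)]
        _ = ENNReal.ofReal (56*C₁^2*T) * ∑' (j : ℕ), ENNReal.ofReal (((L + (j:ℝ)*Real.log 2)^3)⁻¹) :=
            ENNReal.tsum_mul_left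
        _ ≤ ENNReal.ofReal (56*C₁^2*T) * ENNReal.ofReal (3/L^2) := by
            apply mul_le_mul_right
            rw [← ENNReal.ofReal_tsum_of_nonneg
              (fun j => le_of_lt (inv_pos.2 (pow_pos (hLjpos j) 3))) hTsum0]
            exact ENNReal.ofReal_le_ofReal hTle0
        _ = ENNReal.ofReal ((56*C₁^2*T) * (3/L^2)) := (ENNReal.ofReal_mul (by positivity)).symm
        _ = ENNReal.ofReal (168*C₁^2*T/L^2) := by congr 1; ring
    have hIle : ∫ z in carlesonSq b, g z ≤ 168*C₁^2*T/L^2 := by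
      rw [hIeq]
      exact ENNReal.toReal_le_of_le_ofReal (by positivity) hchain
    have hInn : (0:ℝ) ≤ ∫ z in carlesonSq b, g z := MeasureTheory.integral_nonneg_of_ae hnn
    have hπ : π⁻¹ ≤ 1 := inv_le_one_of_one_le₀ (by linarith [Real.pi_gt_three])
    have hπ0 : (0:ℝ) ≤ π⁻¹ := by positivity
    calc L^2 / T * (π⁻¹ * ∫ z in carlesonSq b, g z)
        ≤ L^2 / T * (1 * ∫ z in carlesonSq b, g z) := by
          apply mul_le_mul_of_nonneg_left _ (by positivity)
          exact mul_le_mul_of_nonneg_right hπ hInn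
      _ = L^2 / T * ∫ z in carlesonSq b, g z := by ring
      _ ≤ L^2 / T * (168*C₁^2*T/L^2) :=
          mul_le_mul_of_nonneg_left hIle (by positivity)
      _ = 168 * C₁^2 := by
          field_simp
  · have hnotint : ¬ MeasureTheory.Integrable g
        (MeasureTheory.volume.restrict (carlesonSq b)) :=
      fun h => hAESM h.aestronglyMeasurable
    rw [MeasureTheory.integral_undef hnotint, mul_zero, mul_zero]
    positivity
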